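/- Every linear combination of positive compact operators between normed lattices E and F is a completely quasi Levi operator. -/

import Mathlib

/-- Order convergence of a net. -/
def OConvNet {ι F : Type*} [Preorder ι] [Lattice F] [AddCommGroup F]
    (x : ι → F) (x₀ : F) : Prop :=
  ∃ D : Set F, D.Nonempty ∧ DirectedOn (· ≥ ·) D ∧ IsGLB D 0 ∧
    ∀ y ∈ D, ∃ α₀, ∀ α, α₀ ≤ α → |x α - x₀| ≤ y

/-- Order convergence of a sequence. -/
def OConvSeq {F : Type*} [Lattice F] [AddCommGroup F] (x : ℕ → F) (x₀ : F) : Prop :=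
  ∃ y : ℕ → F, Antitone y ∧ IsGLB (Set.range y) 0 ∧
    ∀ m, ∃ n₀, ∀ n, n₀ ≤ n → |x n - x₀| ≤ y m

/-- A net is order-Cauchy if its double net of differences order converges to `0`. -/
def OCauchyNet {ι F : Type*} [Preorder ι] [Lattice F] [AddCommGroup F]
    (x : ι → F) : Prop :=
  OConvNet (fun p : ι × ι => x p.1 - x p.2) (0 : F)

/-- A sequence is order-Cauchy if its double sequence of differences order converges to `0`. -/
def OCauchySeq' {F : Type*} [Lattice F] [AddCommGroup F] (x : ℕ → F) : Prop :=
  OConvNet (fun p : ℕ × ℕ => x p.1 - x p.2) (0 : F)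

section Maps
variable {E F : Type*} [Lattice E] [AddCommGroup E] [Norm E] [Lattice F] [AddCommGroup F]

def IsLeviMap (T : E → F) : Prop :=
  ∀ (ι : Type) [Nonempty ι] [Preorder ι] [IsDirected ι (· ≤ ·)],
    ∀ x : ι → E, Monotone x → (∃ C, ∀ α, ‖x α‖ ≤ C) →
      ∃ x₀ : E, OConvNet (fun α => T (x α)) (T x₀)

def IsSigmaLeviMap (T : E → F) : Prop :=
  ∀ x : ℕ → E, Monotone x → (∃ C, ∀ n, ‖x n‖ ≤ C) →
    ∃ x₀ : E, OConvSeq (fun n => T (x n)) (T x₀)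

def IsCqLeviMap (T : E → F) : Prop :=
  ∀ (ι : Type) [Nonempty ι] [Preorder ι] [IsDirected ι (· ≤ ·)],
    ∀ x : ι → E, Monotone x → (∃ C, ∀ α, ‖x α‖ ≤ C) →
      ∃ y₀ : F, OConvNet (fun α => T (x α)) y₀

def IsCqSigmaLeviMap (T : E → F) : Prop :=
  ∀ x : ℕ → E, Monotone x → (∃ C, ∀ n, ‖x n‖ ≤ C) →
    ∃ y₀ : F, OConvSeq (fun n => T (x n)) y₀

def IsQLeviMap (T : E → F) : Prop :=
  ∀ (ι : Type) [Nonempty ι] [Preorder ι] [IsDirected ι (· ≤ ·)],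
    ∀ x : ι → E, Monotone x → (∃ C, ∀ α, ‖x α‖ ≤ C) →
      OCauchyNet (fun α => T (x α))

def IsQSigmaLeviMap (T : E → F) : Prop :=
  ∀ x : ℕ → E, Monotone x → (∃ C, ∀ n, ‖x n‖ ≤ C) →
    OCauchySeq' (fun n => T (x n))

end Maps

/-! ### Auxiliary lemmas -/

section SmulPos
variable {F : Type*} [NormedAddCommGroup F] [Lattice F] [IsOrderedAddMonoid F] [HasSolidNorm F]

lemma aux_nsmul_disj {a b : F} (ha : 0 ≤ a) (hb : 0 ≤ b) (h : a ⊓ b = 0) :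
    ∀ n : ℕ, (n • a) ⊓ b = 0 := by
  intro n
  induction n with
  | zero => simp [zero_nsmul, inf_eq_left.mpr hb]
  | succ n ih =>
      have h1 : ((n + 1) • a) ⊓ b ≤ (n • a + a) ⊓ (n • a + b) := by
        rw [succ_nsmul]
        exact inf_le_inf_left _ (le_add_of_nonneg_left (nsmul_nonneg ha n))
      rw [← add_inf, h, add_zero] at h1
      have h2 : ((n + 1) • a) ⊓ b ≤ (n • a) ⊓ b := le_inf h1 inf_le_right
      rw [ih] at h2
      exact le_antisymm h2 (le_inf (nsmul_nonneg ha _) hb)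

lemma aux_pos_of_nsmul {n : ℕ} (hn : 0 < n) {y : F} (h : 0 ≤ n • y) : 0 ≤ y := by
  have hd : y⁺ ⊓ y⁻ = 0 := posPart_inf_negPart_eq_zero y
  have hsub : n • y = n • y⁺ - n • y⁻ := by rw [← nsmul_sub, posPart_sub_negPart]
  have h2 : n • y⁻ ≤ n • y⁺ := sub_nonneg.mp (hsub ▸ h)
  have h3 : y⁻ ≤ n • y⁻ := by
    calc y⁻ = 1 • y⁻ := (one_nsmul _).symm
    _ ≤ n • y⁻ := nsmul_le_nsmul_left (negPart_nonneg y) hn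
  have h4 : (n • y⁺) ⊓ y⁻ = 0 := aux_nsmul_disj (posPart_nonneg y) (negPart_nonneg y) hd n
  have h5 : y⁻ = 0 := by
    have := inf_eq_right.mpr (h3.trans h2)
    rw [h4] at this; exact this.symm
  have h6 := posPart_sub_negPart y
  rw [h5, sub_zero] at h6
  rw [← h6]; exact posPart_nonneg y

variable [NormedSpace ℝ F]

lemma aux_rat_smul_nonneg {q : ℚ} (hq : 0 ≤ q) {v : F} (hv : 0 ≤ v) : 0 ≤ (q : ℝ) • v := by
  have hden : 0 < q.den := q.den_pos
  apply aux_pos_of_nsmul hden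
  have h1 : (q.den : ℕ) • ((q : ℝ) • v) = ((q.den : ℝ) * (q : ℝ)) • v := by
    rw [← Nat.cast_smul_eq_nsmul ℝ, smul_smul]
  have h2 : (q.den : ℝ) * (q : ℝ) = (q.num : ℝ) := by
    rw [mul_comm]
    exact_mod_cast congrArg (fun x : ℚ => (x : ℝ)) (Rat.mul_den_eq_num q)
  rw [h1, h2, ← Int.toNat_of_nonneg (Rat.num_nonneg.mpr hq)]
  push_cast
  rw [Nat.cast_smul_eq_nsmul]
  exact nsmul_nonneg hv _

lemma aux_smul_nonneg {c : ℝ} (hc : 0 ≤ c) {v : F} (hv : 0 ≤ v) : 0 ≤ c • v := by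
  have h1 : ∀ n : ℕ, ∃ q : ℚ, c < (q : ℝ) ∧ (q : ℝ) < c + 1 / (n + 1) := by
    intro n
    exact exists_rat_btwn (lt_add_of_pos_right c (by positivity))
  choose q hq1 hq2 using h1
  have hq0 : ∀ n, 0 ≤ q n := by
    intro n
    have : (0 : ℝ) < (q n : ℝ) := lt_of_le_of_lt hc (hq1 n)
    exact_mod_cast this.le
  have htend : Filter.Tendsto (fun n : ℕ => ((q n : ℝ))) Filter.atTop (nhds c) := by
    have hup : Filter.Tendsto (fun n : ℕ => c + 1 / ((n : ℝ) + 1)) Filter.atTop (nhds (c + 0)) :=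
      Filter.Tendsto.const_add _ tendsto_one_div_add_atTop_nhds_zero_nat
    rw [add_zero] at hup
    exact tendsto_of_tendsto_of_tendsto_of_le_of_le tendsto_const_nhds hup
      (fun n => (hq1 n).le) (fun n => (hq2 n).le)
  have htend2 : Filter.Tendsto (fun n : ℕ => ((q n : ℝ)) • v) Filter.atTop (nhds (c • v)) :=
    htend.smul_const v
  exact isClosed_nonneg.mem_of_tendsto htend2
    (Filter.Eventually.of_forall fun n => aux_rat_smul_nonneg (hq0 n) hv)

lemma aux_smul_mono {c : ℝ} (hc : 0 ≤ c) {w w' : F} (h : w ≤ w') : c • w ≤ c • w' := by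
  have := aux_smul_nonneg hc (sub_nonneg.mpr h)
  rwa [smul_sub, sub_nonneg] at this

lemma aux_abs_smul_le (c : ℝ) (z : F) : |c • z| ≤ |c| • |z| := by
  rcases le_total 0 c with hc | hc
  · rw [abs_of_nonneg hc]
    refine abs_le'.mpr ⟨aux_smul_mono hc (le_abs_self z), ?_⟩
    rw [← smul_neg]
    exact aux_smul_mono hc (neg_le_abs z)
  · rw [abs_of_nonpos hc]
    have hc' : 0 ≤ -c := neg_nonneg.mpr hc
    refine abs_le'.mpr ⟨?_, ?_⟩
    · have : c • z = (-c) • (-z) := by rw [neg_smul, smul_neg, neg_neg]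
      rw [this]; exact aux_smul_mono hc' (neg_le_abs z)
    · rw [← neg_smul]; exact aux_smul_mono hc' (le_abs_self z)

end SmulPos

section OConvLemmas
set_option linter.unusedSectionVars false
variable {ι F : Type*} [Preorder ι] [Nonempty ι] [IsDirected ι (· ≤ ·)]
  [NormedAddCommGroup F] [Lattice F] [IsOrderedAddMonoid F] [HasSolidNorm F]

lemma oconv_const (y₀ : F) : OConvNet (fun _ : ι => y₀) y₀ := by
  refine ⟨{0}, Set.singleton_nonempty 0, ?_, isGLB_singleton, ?_⟩
  · rintro x rfl y rfl
    exact ⟨0, rfl, le_refl _, le_refl _⟩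
  · rintro y rfl
    exact ⟨Classical.arbitrary ι, fun α _ => by simp⟩

lemma oconv_add {f g : ι → F} {a b : F} (hf : OConvNet f a) (hg : OConvNet g b) :
    OConvNet (fun α => f α + g α) (a + b) := by
  obtain ⟨D1, ⟨y1', hy1'⟩, hdir1, hglb1, hbd1⟩ := hf
  obtain ⟨D2, ⟨y2', hy2'⟩, hdir2, hglb2, hbd2⟩ := hg
  refine ⟨Set.image2 (· + ·) D1 D2, ⟨y1' + y2', Set.mem_image2_of_mem hy1' hy2'⟩, ?_, ⟨?_, ?_⟩, ?_⟩
  · rintro _ ⟨u1, hu1, u2, hu2, rfl⟩ _ ⟨v1, hv1, v2, hv2, rfl⟩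
    obtain ⟨w1, hw1, hw1u, hw1v⟩ := hdir1 u1 hu1 v1 hv1
    obtain ⟨w2, hw2, hw2u, hw2v⟩ := hdir2 u2 hu2 v2 hv2
    exact ⟨w1 + w2, Set.mem_image2_of_mem hw1 hw2, add_le_add hw1u hw2u, add_le_add hw1v hw2v⟩
  · rintro _ ⟨u1, hu1, u2, hu2, rfl⟩
    exact add_nonneg (hglb1.1 hu1) (hglb2.1 hu2)
  · intro b' hb'
    have h1 : ∀ u2 ∈ D2, b' ≤ u2 := by
      intro u2 hu2
      have h2 : b' - u2 ≤ 0 := by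
        refine hglb1.2 fun u1 hu1 => ?_
        have h3 : b' ≤ u1 + u2 := hb' (Set.mem_image2_of_mem hu1 hu2)
        exact sub_le_iff_le_add.mpr h3
      exact sub_nonpos.mp h2
    exact hglb2.2 h1
  · rintro _ ⟨u1, hu1, u2, hu2, rfl⟩
    obtain ⟨α₁, hα₁⟩ := hbd1 u1 hu1
    obtain ⟨α₂, hα₂⟩ := hbd2 u2 hu2
    obtain ⟨α₀, h01, h02⟩ := directed_of (· ≤ ·) α₁ α₂
    refine ⟨α₀, fun α hα => ?_⟩
    have heq : f α + g α - (a + b) = (f α - a) + (g α - b) := by abel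
    rw [heq]
    exact (abs_add_le _ _).trans (add_le_add (hα₁ α (h01.trans hα)) (hα₂ α (h02.trans hα)))

lemma oconv_smul [NormedSpace ℝ F] {f : ι → F} {a : F} (c : ℝ) (hf : OConvNet f a) :
    OConvNet (fun α => c • f α) (c • a) := by
  obtain ⟨D, ⟨y', hy'⟩, hdir, hglb, hbd⟩ := hf
  refine ⟨(fun y => |c| • y) '' D, ⟨_, Set.mem_image_of_mem _ hy'⟩, ?_, ⟨?_, ?_⟩, ?_⟩
  · rintro _ ⟨u, hu, rfl⟩ _ ⟨v, hv, rfl⟩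
    obtain ⟨w, hw, hwu, hwv⟩ := hdir u hu v hv
    exact ⟨|c| • w, Set.mem_image_of_mem _ hw, aux_smul_mono (abs_nonneg c) hwu,
      aux_smul_mono (abs_nonneg c) hwv⟩
  · rintro _ ⟨u, hu, rfl⟩
    exact aux_smul_nonneg (abs_nonneg c) (hglb.1 hu)
  · intro b' hb'
    rcases eq_or_ne c 0 with rfl | hc
    · have := hb' (Set.mem_image_of_mem _ hy')
      simpa using this
    · have habs : 0 < |c| := abs_pos.mpr hc
      have h1 : ∀ u ∈ D, |c|⁻¹ • b' ≤ u := by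
        intro u hu
        have h2 : b' ≤ |c| • u := hb' (Set.mem_image_of_mem _ hu)
        have h3 := aux_smul_mono (inv_nonneg.mpr habs.le) h2
        rwa [smul_smul, inv_mul_cancel₀ habs.ne', one_smul] at h3
      have h4 : |c|⁻¹ • b' ≤ 0 := hglb.2 h1
      have h5 := aux_smul_mono habs.le h4
      rwa [smul_smul, mul_inv_cancel₀ habs.ne', one_smul, smul_zero] at h5
  · rintro _ ⟨u, hu, rfl⟩
    obtain ⟨α₀, hα₀⟩ := hbd u hu
    refine ⟨α₀, fun α hα => ?_⟩
    rw [← smul_sub]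
    exact (aux_abs_smul_le c _).trans (aux_smul_mono (abs_nonneg c) (hα₀ α hα))

end OConvLemmas

open Pointwise in
/-- A positive compact operator is completely quasi Levi. -/
lemma positive_compact_isCqLevi {E F : Type*}
    [NormedAddCommGroup E] [Lattice E] [IsOrderedAddMonoid E] [HasSolidNorm E] [NormedSpace ℝ E]
    [NormedAddCommGroup F] [Lattice F] [IsOrderedAddMonoid F] [HasSolidNorm F] [NormedSpace ℝ F]
    (S : E →ₗ[ℝ] F) (hpos : ∀ x : E, 0 ≤ x → 0 ≤ S x)
    (hcomp : IsCompactOperator (S : E → F)) :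
    IsCqLeviMap (S : E → F) := by
  intro ι _ _ _ x hx hbd
  obtain ⟨C, hC⟩ := hbd
  obtain ⟨K, hK, hKmem⟩ := hcomp
  obtain ⟨r, hr, hball⟩ := Metric.mem_nhds_iff.mp hKmem
  have hC0 : 0 ≤ C := le_trans (norm_nonneg _) (hC (Classical.arbitrary ι))
  set M : ℝ := (C + 1) / r with hM
  have hM0 : 0 < M := by positivity
  have hmono : ∀ {α β : ι}, α ≤ β → S (x α) ≤ S (x β) := by
    intro α β h
    have := hpos _ (sub_nonneg.mpr (hx h))
    rw [map_sub] at this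
    exact sub_nonneg.mp this
  have hmem : ∀ α, S (x α) ∈ M • K := by
    intro α
    have h1 : M⁻¹ • x α ∈ Metric.ball (0 : E) r := by
      rw [mem_ball_zero_iff, norm_smul, norm_inv, Real.norm_of_nonneg hM0.le]
      have h2 : M⁻¹ * ‖x α‖ ≤ M⁻¹ * C := by
        have := hC α
        gcongr
      have h3 : M⁻¹ * C < M⁻¹ * (C + 1) := by
        have : (0:ℝ) < M⁻¹ := inv_pos.mpr hM0
        nlinarith
      have h4 : M⁻¹ * (C + 1) = r := by
        rw [hM]
        field_simp
      linarith
    have h2 : S (M⁻¹ • x α) ∈ K := hball h1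
    have h3 : S (x α) = M • S (M⁻¹ • x α) := by
      rw [← map_smul, smul_smul, mul_inv_cancel₀ hM0.ne', one_smul]
    rw [h3]
    exact Set.smul_mem_smul_set h2
  have hKM : IsCompact (M • K) := hK.smul M
  haveI : (Filter.atTop : Filter ι).NeBot := Filter.atTop_neBot_iff.mpr ⟨‹_›, ‹_›⟩
  have hle : Filter.map (fun α => S (x α)) Filter.atTop ≤ Filter.principal (M • K) := by
    rw [Filter.le_principal_iff, Filter.mem_map]
    exact Filter.Eventually.of_forall hmem
  obtain ⟨y, _, hy⟩ := hKM.exists_clusterPt hle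
  have hclos : ∀ α, y ∈ closure ((fun β => S (x β)) '' Set.Ici α) := by
    intro α
    have hmem2 : (fun β => S (x β)) '' Set.Ici α ∈ Filter.map (fun β => S (x β)) Filter.atTop :=
      Filter.image_mem_map (Filter.Ici_mem_atTop α)
    exact mem_closure_iff_clusterPt.mpr (hy.mono (Filter.le_principal_iff.mpr hmem2))
  have hub : ∀ α, S (x α) ≤ y := by
    intro α
    have hcl : IsClosed {w : F | S (x α) ≤ w} := isClosed_le continuous_const continuous_id
    have hsub : (fun β => S (x β)) '' Set.Ici α ⊆ {w : F | S (x α) ≤ w} := by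
      rintro _ ⟨β, hβ, rfl⟩
      exact hmono hβ
    exact closure_minimal hsub hcl (hclos α)
  refine ⟨y, Set.range (fun α => y - S (x α)),
    ⟨_, Set.mem_range_self (Classical.arbitrary ι)⟩, ?_, ⟨?_, ?_⟩, ?_⟩
  · rintro _ ⟨α, rfl⟩ _ ⟨β, rfl⟩
    obtain ⟨γ, hγα, hγβ⟩ := directed_of (· ≤ ·) α β
    exact ⟨y - S (x γ), Set.mem_range_self γ,
      sub_le_sub_left (hmono hγα) y, sub_le_sub_left (hmono hγβ) y⟩
  · rintro _ ⟨α, rfl⟩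
    exact sub_nonneg.mpr (hub α)
  · intro b hb
    have h1 : ∀ α, S (x α) ≤ y - b := by
      intro α
      have hb' : b ≤ y - S (x α) := hb (Set.mem_range_self α)
      have h2 : S (x α) + b ≤ y := add_le_of_le_sub_left hb'
      exact le_sub_iff_add_le.mpr h2
    have hcl : IsClosed {w : F | w ≤ y - b} := isClosed_le continuous_id continuous_const
    have hsub : (fun β => S (x β)) '' Set.Ici (Classical.arbitrary ι) ⊆ {w : F | w ≤ y - b} := by
      rintro _ ⟨β, _, rfl⟩
      exact h1 β
    have h4 : y ≤ y - b := closure_minimal hsub hcl (hclos (Classical.arbitrary ι))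
    have h5 : b + y ≤ 0 + y := by
      rw [zero_add, add_comm]
      exact add_le_of_le_sub_right h4
    exact le_of_add_le_add_right h5
  · rintro _ ⟨α, rfl⟩
    refine ⟨α, fun β hβ => ?_⟩
    have h1 : |S (x β) - y| = y - S (x β) := by
      rw [abs_of_nonpos (sub_nonpos.mpr (hub β)), neg_sub]
    rw [h1]
    exact sub_le_sub_left (hmono hβ) y

/-- every linear combination of positive compact operators between normed
lattices is a completely quasi Levi operator. -/
theorem span_positive_compact_isCqLevi {E F : Type*}
    [NormedAddCommGroup E] [Lattice E] [IsOrderedAddMonoid E] [HasSolidNorm E] [NormedSpace ℝ E]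
    [NormedAddCommGroup F] [Lattice F] [IsOrderedAddMonoid F] [HasSolidNorm F] [NormedSpace ℝ F]
    (T : E →ₗ[ℝ] F)
    (hT : T ∈ Submodule.span ℝ
      {S : E →ₗ[ℝ] F | (∀ x : E, 0 ≤ x → 0 ≤ S x) ∧ IsCompactOperator (S : E → F)}) :
    IsCqLeviMap (T : E → F) := by
  induction hT using Submodule.span_induction with
  | mem S hS => exact positive_compact_isCqLevi S hS.1 hS.2
  | zero =>
      intro ι _ _ _ x hx hbd
      refine ⟨0, ?_⟩
      simpa using oconv_const (ι := ι) (0 : F)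
  | add S S' hS hS' ihS ihS' =>
      intro ι _ _ _ x hx hbd
      obtain ⟨y1, h1⟩ := ihS ι x hx hbd
      obtain ⟨y2, h2⟩ := ihS' ι x hx hbd
      exact ⟨y1 + y2, by simpa [LinearMap.add_apply] using oconv_add h1 h2⟩
  | smul c S hS ih =>
      intro ι _ _ _ x hx hbd
      obtain ⟨y0, h0⟩ := ih ι x hx hbd
      exact ⟨c • y0, by simpa [LinearMap.smul_apply] using oconv_smul c h0⟩
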